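/- Let L(λ) = λ³A₃ + λ²A₂ + λA₁ + A₀ be an n×n complex matrix polynomial where A₃, A₂, A₀ are Hermitian positive definite and A₁ is Hermitian positive semidefinite. If in addition A₂ ≥ A₃ and A₁ ≥ A₀ in the Loewner order (i.e., A₂ − A₃ and A₁ − A₀ are positive semidefinite), then all eigenvalues of L(λ) lie in the closed left half-plane: every λ₀ ∈ ℂ with det(λ₀³A₃ + λ₀²A₂ + λ₀A₁ + A₀) = 0 satisfies Re λ₀ ≤ 0. -/

import Mathlib

open Matrix
open scoped ComplexOrder

lemma scalar_cubic (a b c d : ℝ) (ha : 0 < a) (hb : 0 < b) (hd : 0 < d) (hc : 0 ≤ c)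
    (hba : a ≤ b) (hdc : d ≤ c) (lam : ℂ)
    (he : (a : ℂ) * lam ^ 3 + b * lam ^ 2 + c * lam + d = 0) : lam.re ≤ 0 := by
  by_contra hx
  push_neg at hx
  have hre := congrArg Complex.re he
  have him := congrArg Complex.im he
  simp [Complex.ext_iff, pow_succ, Complex.mul_re, Complex.mul_im] at hre him
  ring_nf at hre him
  set x := lam.re with hxdef
  set s := lam.im with hsdef
  have hbc : a * d ≤ b * c := mul_le_mul hba hdc hd.le hb.le
  rcases eq_or_ne s 0 with hs | hs
  · rw [hs] at hre
    nlinarith [pow_pos hx 3, mul_pos hx hx, mul_pos ha (pow_pos hx 3),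
      mul_pos hb (mul_pos hx hx), mul_nonneg hc hx.le]
  · have hfac : s * (3 * a * x ^ 2 - a * s ^ 2 + 2 * b * x + c) = 0 := by
      linear_combination him
    have key : a * s ^ 2 = 3 * a * x ^ 2 + 2 * b * x + c := by
      rcases mul_eq_zero.mp hfac with h | h
      · exact absurd h hs
      · linarith
    have main : 8*a^2*x^3 + 8*a*b*x^2 + 2*a*c*x + 2*b^2*x + b*c - a*d = 0 := by
      linear_combination (-a) * hre - (3*a*x + b) * key
    nlinarith [main, hbc, mul_pos (mul_pos ha ha) (pow_pos hx 3),
      mul_pos (mul_pos ha hb) (mul_pos hx hx),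
      mul_nonneg (mul_nonneg ha.le hc) hx.le,
      mul_nonneg (mul_nonneg hb.le hb.le) hx.le]

/-- Theorem 5.9 (second part): let `L(λ) = λ³A₃ + λ²A₂ + λA₁ + A₀` with
`A₃, A₂, A₀` Hermitian positive definite, `A₁` Hermitian positive semidefinite,
`A₂ ≥ A₃` and `A₁ ≥ A₀` in the Loewner order. Then all eigenvalues of `L(λ)` lie
in the closed left half-plane. -/
theorem cubic_psd_poly_eigenvalues_left_half_plane {n : ℕ}
    (A₀ A₁ A₂ A₃ : Matrix (Fin n) (Fin n) ℂ)
    (h₃ : A₃.PosDef) (h₂ : A₂.PosDef) (h₀ : A₀.PosDef) (h₁ : A₁.PosSemidef)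
    (h23 : (A₂ - A₃).PosSemidef) (h10 : (A₁ - A₀).PosSemidef)
    (lam : ℂ)
    (h : (lam ^ 3 • A₃ + lam ^ 2 • A₂ + lam • A₁ + A₀).det = 0) :
    lam.re ≤ 0 := by
  obtain ⟨v, hv0, hv⟩ := (Matrix.exists_mulVec_eq_zero_iff).mpr h
  have hq : star v ⬝ᵥ ((lam ^ 3 • A₃ + lam ^ 2 • A₂ + lam • A₁ + A₀) *ᵥ v) = 0 := by
    rw [hv]; simp
  rw [add_mulVec, add_mulVec, add_mulVec, smul_mulVec, smul_mulVec,
    smul_mulVec, dotProduct_add, dotProduct_add, dotProduct_add,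
    dotProduct_smul, dotProduct_smul, dotProduct_smul] at hq
  simp only [smul_eq_mul] at hq
  set q3 := star v ⬝ᵥ A₃ *ᵥ v with hq3
  set q2 := star v ⬝ᵥ A₂ *ᵥ v with hq2
  set q1 := star v ⬝ᵥ A₁ *ᵥ v with hq1
  set q0 := star v ⬝ᵥ A₀ *ᵥ v with hq0
  have p3 := h₃.dotProduct_mulVec_pos hv0
  have p2 := h₂.dotProduct_mulVec_pos hv0
  have p0 := h₀.dotProduct_mulVec_pos hv0
  have p1 := h₁.dotProduct_mulVec_nonneg v
  have p23 := h23.dotProduct_mulVec_nonneg v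
  have p10 := h10.dotProduct_mulVec_nonneg v
  rw [sub_mulVec, dotProduct_sub] at p23 p10
  rw [Complex.lt_def] at p3 p2 p0
  rw [Complex.le_def] at p1 p23 p10
  simp only [Complex.zero_re, Complex.zero_im, Complex.sub_re, Complex.sub_im] at *
  have e3 : q3 = ((q3.re : ℝ) : ℂ) := Complex.ext (by simp) p3.2.symm
  have e2 : q2 = ((q2.re : ℝ) : ℂ) := Complex.ext (by simp) p2.2.symm
  have e1 : q1 = ((q1.re : ℝ) : ℂ) := Complex.ext (by simp) p1.2.symm
  have e0 : q0 = ((q0.re : ℝ) : ℂ) := Complex.ext (by simp) p0.2.symm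
  apply scalar_cubic q3.re q2.re q1.re q0.re p3.1 p2.1 p0.1 p1.1
    (by linarith [p23.1]) (by linarith [p10.1])
  rw [← e3, ← e2, ← e1, ← e0]
  linear_combination hq
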